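/- Let [b_1,…,b_r] be a sequence of integers, all ≥ 2, that is admissible for chains. Then b_1 ≥ 3 or b_r ≥ 3. -/

import Mathlib

/-- The numerator sequence of a sequence `a`: `Pseq a (i+1)` is the number
`P_i` determined by `P_{-1} = 0`, `P_0 = 1` and `P_{i+1} = a_{i+1}·P_i − P_{i−1}`,
where `a k` denotes `a_{k+1}` (0-indexed access). -/
def Pseq (a : ℕ → ℤ) : ℕ → ℤ
  | 0 => 0
  | 1 => 1
  | (k + 2) => a k * Pseq a (k + 1) - Pseq a k

/-- A finite sequence `a₁,…,aₛ` is admissible if `P_i > 0` for `i = 0,…,s−1`. -/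
def Admissible (L : List ℤ) : Prop :=
  ∀ i < L.length, 0 < Pseq (fun k => L.getD k 1) (i + 1)

/-- `chainSeq L k` consists of `k+1` consecutive copies of `L` separated by
`k` single entries equal to `1`. -/
def chainSeq (L : List ℤ) : ℕ → List ℤ
  | 0 => L
  | (k + 1) => chainSeq L k ++ 1 :: L

/-- `Pseq a n` only depends on the values `a k` for `k + 2 ≤ n`. -/
lemma Pseq_congr (a b : ℕ → ℤ) : ∀ n : ℕ, (∀ k, k + 2 ≤ n → a k = b k) → Pseq a n = Pseq b n
  | 0, _ => rfl
  | 1, _ => rfl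
  | (k + 2), h => by
    rw [Pseq, Pseq, Pseq_congr a b (k + 1) (fun j hj => h j (by omega)),
      Pseq_congr a b k (fun j hj => h j (by omega)), h k le_rfl]

/-- If `[b₁,…,b_r]` (all entries `≥ 2`) is admissible for chains, then
`b₁ ≥ 3` or `b_r ≥ 3`. -/
theorem stmt10 (L : List ℤ) (hne : L ≠ []) (h2 : ∀ b ∈ L, 2 ≤ b)
    (hadm : ∀ k : ℕ, Admissible (chainSeq L k)) :
    3 ≤ L.headI ∨ 3 ≤ L.getLast! := by
  by_contra hcon
  push_neg at hcon
  obtain ⟨hh, hl⟩ := hcon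
  set r := L.length with hr
  have hr1 : 1 ≤ r := by
    cases L with
    | nil => exact absurd rfl hne
    | cons a t => simp [hr]
  -- head and last are equal to 2
  have hheadmem : L.headI ∈ L := by
    cases L with
    | nil => exact absurd rfl hne
    | cons a t => simp
  have hlastmem : L.getLast! ∈ L := by
    rw [List.getLast!_of_getLast? (List.getLast?_eq_getLast hne)]
    exact List.getLast_mem hne
  have hhead2 : L.headI = 2 := le_antisymm (by omega) (h2 _ hheadmem)
  have hlast2 : L.getLast! = 2 := le_antisymm (by omega) (h2 _ hlastmem)
  -- basic getD facts
  have hgetD0 : L.getD 0 1 = L.headI := by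
    cases L with
    | nil => exact absurd rfl hne
    | cons a t => rfl
  have hgetDlast : L.getD (r - 1) 1 = L.getLast! := by
    rw [List.getLast!_of_getLast? (List.getLast?_eq_getLast hne),
      List.getLast_eq_getElem, List.getD_eq_getElem L 1 (by omega : r - 1 < L.length)]
  set f : ℕ → ℤ := fun k => L.getD k 1 with hf
  set g : ℕ → ℤ := fun k => (chainSeq L 2).getD k 1 with hg
  have hchain2 : chainSeq L 2 = (L ++ 1 :: L) ++ 1 :: L := rfl
  have hlen2 : (chainSeq L 2).length = 3 * r + 2 := by
    rw [hchain2]; simp [hr]; ring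
  -- g agrees with f below r
  have hlen1 : (L ++ 1 :: L).length = 2 * r + 1 := by
    simp [hr]; omega
  have hgf : ∀ k, k < r → g k = f k := by
    intro k hk
    show ((L ++ 1 :: L) ++ 1 :: L).getD k 1 = f k
    rw [List.getD_append _ _ _ _ (by rw [hlen1]; omega),
      List.getD_append _ _ _ _ (by omega)]
  have hgr : g r = 1 := by
    show ((L ++ 1 :: L) ++ 1 :: L).getD r 1 = 1
    rw [List.getD_append _ _ _ _ (by rw [hlen1]; omega),
      List.getD_append_right _ _ _ _ (by omega)]
    have h0 : r - L.length = 0 := by omega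
    rw [h0, List.getD_cons_zero]
  have hgr1 : g (r + 1) = 2 := by
    show ((L ++ 1 :: L) ++ 1 :: L).getD (r + 1) 1 = 2
    rw [List.getD_append _ _ _ _ (by rw [hlen1]; omega),
      List.getD_append_right _ _ _ _ (by omega)]
    have h1 : r + 1 - L.length = 1 := by omega
    rw [h1, List.getD_cons_succ, hgetD0, hhead2]
  -- Pseq g agrees with Pseq f up to r+1
  have hPeq : ∀ n, n ≤ r + 1 → Pseq g n = Pseq f n := fun n hn =>
    Pseq_congr g f n (fun k hk => hgf k (by omega))
  set x := Pseq f (r + 1) with hx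
  set y := Pseq f r with hy
  set w := Pseq f (r - 1) with hw
  -- x = 2 y - w  using the last entry = 2
  have hxval : x = 2 * y - w := by
    have hrw : r + 1 = (r - 1) + 2 := by omega
    have hrw2 : (r - 1) + 1 = r := by omega
    rw [hx, hrw, Pseq, hrw2, ← hy, ← hw]
    have hf2 : f (r - 1) = 2 := by
      show L.getD (r - 1) 1 = 2
      rw [hgetDlast, hlast2]
    rw [hf2]
  -- w ≥ 0
  have hwpos : 0 ≤ w := by
    rcases Nat.lt_or_ge r 2 with h | h
    · have : r = 1 := by omega
      simp [hw, this, Pseq]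
    · have := hadm 0 (r - 2) (by simp only [chainSeq]; omega)
      have heq : r - 2 + 1 = r - 1 := by omega
      rw [heq] at this
      exact le_of_lt (by simpa [chainSeq, hw, hf] using this)
  -- the contradiction: Pseq g (r+3) ≤ 0 but admissibility says > 0
  have hP2 : Pseq g (r + 2) = x - y := by
    rw [Pseq, hgr, hPeq (r + 1) le_rfl, hPeq r (by omega), ← hx, ← hy]; ring
  have hP3 : Pseq g (r + 3) = x - 2 * y := by
    have : r + 3 = (r + 1) + 2 := by ring
    rw [this, Pseq, hgr1, hP2, hPeq (r + 1) le_rfl, ← hx]; ring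
  have hpos := hadm 2 (r + 2) (by omega)
  rw [← hg] at hpos
  have : r + 2 + 1 = r + 3 := by ring
  rw [this, hP3, hxval] at hpos
  omega
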